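/- A pinnacle set P = {p_1 > p_2 > ⋯ > p_k} ⊆ [n] with S_n(P) nonempty is maximally admissible (i.e., O(P) = S_k, every permutation of [k] is an admissible pinnacle ordering of P) if and only if p_i ≥ min(2k − i + 2, 3(k+1−i)) for all 2 ≤ i ≤ k−1. -/

import Mathlib

/-! Common definitions: permutations as lists, pinnacle sets, cyclic permutations,
Motzkin/Dyck paths encoded as lists of steps in `{1, 0, -1}`, their weights,
and the various auxiliary quantities from the paper. -/

/-- All permutations of `[n] = {1, …, n}` in one-line notation, as lists. -/
def permsOf (n : ℕ) : List (List ℕ) := (List.range' 1 n).permutations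

/-- The pinnacle set of a permutation given in one-line notation: values `l i`
with `1 ≤ i ≤ length − 2` (0-based) such that `l (i-1) < l i > l (i+1)`. -/
def pinnacleSet (l : List ℕ) : Finset ℕ :=
  ((Finset.Ioo 0 (l.length - 1)).filter
    (fun i => l.getD (i-1) 0 < l.getD i 0 ∧ l.getD (i+1) 0 < l.getD i 0)).image
    (fun i => l.getD i 0)

/-- `|S_n(P)|`: the number of permutations of `[n]` with pinnacle set `P`. -/
def Snp (n : ℕ) (P : Finset ℕ) : ℕ :=
  (permsOf n).countP (fun l => decide (pinnacleSet l = P))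

/-- `q_n(P) = Σ_{Q ⊆ P} 2^{|Q|} |S_n(Q)|`. -/
def qSum (n : ℕ) (P : Finset ℕ) : ℕ :=
  ∑ Q ∈ P.powerset, 2 ^ Q.card * Snp n Q

/-- `s_m(l)`: the number of maximal cyclic runs of entries `≥ m` in the list `l`
seen as a cyclic word (counted by the positions where such a run ends). -/
def segCount (l : List ℕ) (m : ℕ) : ℕ :=
  ((Finset.range l.length).filter
    (fun i => m ≤ l.getD i 0 ∧ l.getD ((i+1) % l.length) 0 < m)).card

/-- The pinnacle set of a cyclic permutation (given by any representative list):
entries whose two cyclic neighbours are both smaller. -/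
def cycPinnacleSet (l : List ℕ) : Finset ℕ :=
  ((Finset.range l.length).filter
    (fun i => l.getD ((i + l.length - 1) % l.length) 0 < l.getD i 0 ∧
              l.getD ((i+1) % l.length) 0 < l.getD i 0)).image (fun i => l.getD i 0)

/-- The Motzkin type of a cyclic permutation of `[n+1]` (a list of length `n+1`):
the lattice path (as a list of steps) through the heights `s_{n+1-i} − 1`. -/
def motzkinType (l : List ℕ) : List ℤ :=
  (List.range (l.length - 2)).map
    (fun i => (segCount l (l.length - 1 - i) : ℤ) - (segCount l (l.length - i) : ℤ))

/-- The Dyck type: the Motzkin type with all horizontal steps removed. -/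
def dyckType (l : List ℕ) : List ℤ := (motzkinType l).filter (fun s => decide (s ≠ 0))

/-- A Motzkin path: steps in `{1, 0, −1}`, partial sums nonnegative, total sum `0`. -/
abbrev IsMotzkinPath (M : List ℤ) : Prop :=
  (∀ s ∈ M, s = 1 ∨ s = 0 ∨ s = -1) ∧
  (∀ i ∈ List.range (M.length + 1), 0 ≤ (M.take i).sum) ∧ M.sum = 0

/-- A Dyck path: steps in `{1, −1}`, partial sums nonnegative, total sum `0`. -/
abbrev IsDyckPath (D : List ℤ) : Prop :=
  (∀ s ∈ D, s = 1 ∨ s = -1) ∧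
  (∀ i ∈ List.range (D.length + 1), 0 ≤ (D.take i).sum) ∧ D.sum = 0

/-- A Dyck meander: steps in `{1, −1}`, partial sums nonnegative. -/
abbrev IsMeander (M : List ℤ) : Prop :=
  (∀ s ∈ M, s = 1 ∨ s = -1) ∧ (∀ i ∈ List.range (M.length + 1), 0 ≤ (M.take i).sum)

/-- Weight of a single step of a Motzkin path starting at height `h`:
`1` for an up step, `2(h+1)` for a horizontal step, `h(h+1)` for a down step. -/
def stepWeight (h s : ℤ) : ℤ := if s = 1 then 1 else if s = 0 then 2*(h+1) else h*(h+1)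

/-- The weight `w_M(M)` of a Motzkin path. -/
def motzkinWeight (M : List ℤ) : ℤ :=
  ∏ i ∈ Finset.range M.length, stepWeight ((M.take i).sum) (M.getD i 0)

/-- All lists of length `m` over `{1, 0, −1}`, each exactly once. -/
def stepLists : ℕ → List (List ℤ)
  | 0 => [[]]
  | m+1 => ((stepLists m).map (List.cons 1)) ++ ((stepLists m).map (List.cons 0)) ++
      ((stepLists m).map (List.cons (-1)))

/-- The (0-based) positions of the up steps of a path. -/
def upPositions (D : List ℤ) : List ℕ :=
  (List.range D.length).filter (fun j => decide (D.getD j 0 = 1))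

/-- 0-based index of the `i`-th (1-based) up step of `D`. -/
def upIdx (D : List ℤ) (i : ℕ) : ℕ := (upPositions D).getD (i-1) 0

/-- The starting height of the `i`-th (1-based) up step of `D`. -/
def upStart (D : List ℤ) (i : ℕ) : ℤ := (D.take (upIdx D i)).sum

/-- `d_i` for a Dyck path `D` with `k` up steps: `d_0 = 0`; for `1 ≤ i ≤ k−1` the
number of down steps between the `i`-th and `(i+1)`-st up steps; `d_k` the number of
down steps at the end of `D`. -/
def dOf (D : List ℤ) (k i : ℕ) : ℕ :=
  if i = 0 then 0
  else if i < k then upIdx D (i+1) - upIdx D i - 1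
  else D.length - 1 - upIdx D k

/-- `ℓ_i`: the height of the top of the `i`-th up step of `D`, with `ℓ_0 = 0`. -/
def lOf (D : List ℤ) (i : ℕ) : ℤ := if i = 0 then 0 else upStart D i + 1

/-- `p_i`: the `i`-th largest element of `P`, with the conventions `p_0 = n+1`
and `p_i = 1` for `i > |P|`. -/
def pElem (n : ℕ) (P : Finset ℕ) (i : ℕ) : ℕ :=
  if i = 0 then n + 1
  else if i ≤ P.card then (P.sort (· ≤ ·)).getD (P.card - i) 0
  else 1

/-- The gap sequence `g_i = p_i − p_{i+1} − 1` of `(n, P)`. -/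
def gap (n : ℕ) (P : Finset ℕ) (i : ℕ) : ℤ :=
  (pElem n P i : ℤ) - pElem n P (i+1) - 1

/-- The complete homogeneous symmetric polynomial `h_m(x_1, …, x_k)` (over `ℤ`). -/
def hpoly (m k : ℕ) (x : Fin k → ℤ) : ℤ :=
  ∑ c ∈ Finset.Nat.antidiagonalTuple k m, ∏ i, x i ^ c i

/-- `f(d, ℓ, g) = 0` if `d > g`, and otherwise
`([ℓ=0] + ℓ(ℓ+1)) · h_{g−d}(ℓ+1, ℓ, …, ℓ−d+1)`. -/
def fwt (d : ℕ) (ℓ g : ℤ) : ℤ :=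
  if g < (d : ℤ) then 0
  else ((if ℓ = 0 then 1 else 0) + ℓ * (ℓ + 1)) *
    hpoly (g - d).toNat (d + 1) (fun i => ℓ + 1 - (i.val : ℤ))

/-- The weight `w_D(n, P, D) = ∏_{i=0}^{k} f(d_i, ℓ_i, g_i)` of a Dyck path `D`
of length `2k` relative to `(n, P)` with `k = |P|`. -/
def wD (n : ℕ) (P : Finset ℕ) (D : List ℤ) : ℤ :=
  ∏ i ∈ Finset.range (P.card + 1), fwt (dOf D P.card i) (lOf D i) (gap n P i)

/-- The weight `w_R(r) = ∏_{m=0}^{k} (r_m + 1)^{p_m − p_{m+1}}` of a sequence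
`r ∈ R_k`, where `r` is encoded by its list `M` of `±1` steps (so that
`r_m` is the `m`-th partial sum of `M`). -/
def wR (n : ℕ) (P : Finset ℕ) (M : List ℤ) : ℤ :=
  ∏ m ∈ Finset.range (M.length + 1),
    ((M.take m).sum + 1) ^ (pElem n P m - pElem n P (m+1))

/-- The list `[p_{σ(1)}, …, p_{σ(k)}]` associated with an ordering `σ` of `[k]`
(given as a list `s`). -/
def orderList (n : ℕ) (P : Finset ℕ) (s : List ℕ) : List ℕ := s.map (pElem n P)

/-- `σ` (as a list `s`, a permutation of `[k]`) is an admissible pinnacle ordering of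
`P ⊆ [n]`: some permutation of `[n]` with pinnacle set `P` has its pinnacles appearing
in the order `p_{σ(1)}, …, p_{σ(k)}`. -/
abbrev IsAdmissibleOrdering (n : ℕ) (P : Finset ℕ) (s : List ℕ) : Prop :=
  ∃ l ∈ permsOf n, pinnacleSet l = P ∧
    l.filter (fun v => decide (v ∈ P)) = orderList n P s

/-- `|O(P)|`: the number of admissible pinnacle orderings of `P`. -/
def countO (n : ℕ) (P : Finset ℕ) : ℕ :=
  (permsOf P.card).countP (fun s => decide (IsAdmissibleOrdering n P s))

/-- The starting heights `ℓ_i` of the up steps of the maximal Dyck type `D_P`: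
`ℓ_1 = 0` and `ℓ_i = min(ℓ_{i−1} + 1, p_i − 3 − 2(k−i))` for `2 ≤ i ≤ k`. -/
def lmax (n : ℕ) (P : Finset ℕ) : ℕ → ℤ
  | 0 => 0
  | 1 => 0
  | (i+2) => min (lmax n P (i+1) + 1)
      ((pElem n P (i+2) : ℤ) - 3 - 2 * ((P.card : ℤ) - (i+2)))

/-- A Motzkin path `M` of length `k−1` is compatible with the maximal Dyck type of `P`:
for `1 ≤ i ≤ k−1` the starting height of the `i`-th step of `M` does not exceed
the starting height `ℓ_i` of the `i`-th up step of `D_P`. -/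
abbrev CompatibleMax (n : ℕ) (P : Finset ℕ) (M : List ℤ) : Prop :=
  ∀ i ∈ Finset.Icc 1 (P.card - 1), (M.take (i-1)).sum ≤ lmax n P i

namespace St18

variable {n k : ℕ} {P : Finset ℕ}

lemma pelem_zero : pElem n P 0 = n + 1 := rfl

lemma sort_length : (P.sort (· ≤ ·)).length = P.card := Finset.length_sort _

lemma sort_get_lt_iff {t t' : ℕ} (ht : t < (P.sort (· ≤ ·)).length)
    (ht' : t' < (P.sort (· ≤ ·)).length) :
    (P.sort (· ≤ ·))[t] < (P.sort (· ≤ ·))[t'] ↔ t < t' := by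
  have hs := List.sortedLT_iff_pairwise.mp (Finset.sortedLT_sort P)
  rw [List.pairwise_iff_getElem] at hs
  constructor
  · intro h
    by_contra hc
    push_neg at hc
    rcases Nat.eq_or_lt_of_le hc with rfl | hlt
    · omega
    · exact absurd (hs _ _ _ _ hlt) (by omega)
  · exact hs _ _ _ _

lemma pelem_eq_get (hk : P.card = k) (i : ℕ) (h1 : 1 ≤ i) (hik : i ≤ k) :
    pElem n P i = (P.sort (· ≤ ·))[k - i]'(by
      rw [sort_length, hk]; omega) := by
  subst hk
  unfold pElem
  rw [if_neg (by omega), if_pos (by omega)]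
  exact List.getD_eq_getElem _ _ (by rw [sort_length]; omega)

lemma pelem_mem (hk : P.card = k) {i : ℕ} (h1 : 1 ≤ i) (hik : i ≤ k) :
    pElem n P i ∈ P := by
  rw [pelem_eq_get hk i h1 hik]
  rw [← Finset.mem_sort (α := ℕ) (· ≤ ·)]
  exact List.getElem_mem _

lemma pelem_anti (hP : P ⊆ Finset.Icc 1 n) (hk : P.card = k) {i j : ℕ}
    (hij : i < j) (hjk : j ≤ k) : pElem n P j < pElem n P i := by
  have hj1 : 1 ≤ j := by omega
  have hmem : pElem n P j ∈ P := pelem_mem hk hj1 hjk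
  have hle : pElem n P j ≤ n := (Finset.mem_Icc.mp (hP hmem)).2
  rcases Nat.eq_zero_or_pos i with hi0 | hi1
  · subst hi0; rw [pelem_zero]; omega
  · rw [pelem_eq_get hk i hi1 (by omega), pelem_eq_get hk j hj1 hjk]
    rw [sort_get_lt_iff]
    omega

lemma pelem_pos (hk : P.card = k) (hP : P ⊆ Finset.Icc 1 n) {i : ℕ} (hik : i ≤ k) :
    1 ≤ pElem n P i := by
  rcases Nat.eq_zero_or_pos i with h | h
  · subst h; rw [pelem_zero]; omega
  · exact (Finset.mem_Icc.mp (hP (pelem_mem hk h hik))).1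

lemma pelem_le_n (hk : P.card = k) (hP : P ⊆ Finset.Icc 1 n) {i : ℕ}
    (h1 : 1 ≤ i) (hik : i ≤ k) : pElem n P i ≤ n :=
  (Finset.mem_Icc.mp (hP (pelem_mem hk h1 hik))).2

lemma pelem_le_iff (hP : P ⊆ Finset.Icc 1 n) (hk : P.card = k) {i j : ℕ}
    (h1 : 1 ≤ i) (hik : i ≤ k) (hjk : j ≤ k) :
    pElem n P j ≤ pElem n P i ↔ i ≤ j := by
  constructor
  · intro h
    by_contra hc
    have := pelem_anti hP hk (show j < i by omega) hik
    omega
  · intro h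
    rcases Nat.eq_or_lt_of_le h with rfl | h
    · exact le_refl _
    · exact (pelem_anti hP hk h hjk).le

lemma pelem_surj (hk : P.card = k) {v : ℕ} (hv : v ∈ P) :
    ∃ i, 1 ≤ i ∧ i ≤ k ∧ pElem n P i = v := by
  rw [← Finset.mem_sort (α := ℕ) (· ≤ ·)] at hv
  obtain ⟨t, ht, hvt⟩ := List.getElem_of_mem hv
  rw [sort_length, hk] at ht
  refine ⟨k - t, by omega, by omega, ?_⟩
  rw [pelem_eq_get hk _ (by omega) (by omega), ← hvt]
  congr 1
  omega

/-- number of non-pinnacle values in `[1,n]` that are `< v` -/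
def nlt (n : ℕ) (P : Finset ℕ) (v : ℕ) : ℕ :=
  ((Finset.Icc 1 n).filter (fun x => x ∉ P ∧ x < v)).card

lemma card_plt (hk : P.card = k) {i : ℕ} (h1 : 1 ≤ i) (hik : i ≤ k) :
    (P.filter (fun x => x < pElem n P i)).card = k - i := by
  classical
  have hlen : (P.sort (· ≤ ·)).length = k := by rw [sort_length, hk]
  have hnd : (P.sort (· ≤ ·)).Nodup := P.sort_nodup _
  have heq : P.filter (fun x => x < pElem n P i)
      = ((P.sort (· ≤ ·)).take (k - i)).toFinset := by
    ext x
    simp only [Finset.mem_filter, List.mem_toFinset]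
    constructor
    · rintro ⟨hxP, hxv⟩
      rw [← Finset.mem_sort (α := ℕ) (· ≤ ·)] at hxP
      obtain ⟨t, ht, hxt⟩ := List.getElem_of_mem hxP
      rw [pelem_eq_get hk i h1 hik] at hxv
      have htlt : t < k - i := by
        by_contra hc
        push_neg at hc
        rcases Nat.eq_or_lt_of_le hc with hcc | hlt
        · subst hcc; rw [hxt] at hxv; omega
        · have := (sort_get_lt_iff (P := P) (by omega) (by omega)).mpr hlt
          rw [hxt] at this
          omega
      have hmem : ((P.sort (· ≤ ·)).take (k - i))[t]'(by
          rw [List.length_take]; omega) ∈ (P.sort (· ≤ ·)).take (k - i) :=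
        List.getElem_mem _
      have hval : ((P.sort (· ≤ ·)).take (k - i))[t]'(by
          rw [List.length_take]; omega) = x := by
        rw [List.getElem_take]; exact hxt
      rwa [hval] at hmem
    · intro hx
      obtain ⟨t, ht, hxt⟩ := List.getElem_of_mem hx
      rw [List.length_take] at ht
      have ht' : t < k - i := by omega
      rw [List.getElem_take] at hxt
      constructor
      · rw [← hxt, ← Finset.mem_sort (α := ℕ) (· ≤ ·)]
        exact List.getElem_mem _
      · rw [pelem_eq_get hk i h1 hik, ← hxt]
        exact (sort_get_lt_iff (by omega) (by omega)).mpr (by omega)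
  rw [heq, List.toFinset_card_of_nodup (hnd.sublist (List.take_sublist _ _)),
    List.length_take]
  omega

lemma nlt_eq (hP : P ⊆ Finset.Icc 1 n) (hk : P.card = k) {i : ℕ}
    (h1 : 1 ≤ i) (hik : i ≤ k) :
    nlt n P (pElem n P i) + (k - i) + 1 = pElem n P i := by
  classical
  set v := pElem n P i with hv
  have hvn : v ≤ n := pelem_le_n hk hP h1 hik
  have hv1 : 1 ≤ v := pelem_pos hk hP hik
  have h1' : (Finset.Icc 1 n).filter (fun x => x ∉ P ∧ x < v)
      = Finset.Icc 1 (v-1) \ P := by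
    ext x
    simp only [Finset.mem_filter, Finset.mem_sdiff, Finset.mem_Icc]
    constructor
    · rintro ⟨⟨hx1, hx2⟩, hxP, hxv⟩
      exact ⟨⟨hx1, by omega⟩, hxP⟩
    · rintro ⟨⟨hx1, hx2⟩, hxP⟩
      exact ⟨⟨hx1, by omega⟩, hxP, by omega⟩
  have h2 : Finset.Icc 1 (v-1) ∩ P = P.filter (fun x => x < v) := by
    ext x
    simp only [Finset.mem_inter, Finset.mem_Icc, Finset.mem_filter]
    constructor
    · rintro ⟨⟨hx1, hx2⟩, hxP⟩
      exact ⟨hxP, by omega⟩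
    · rintro ⟨hxP, hxv⟩
      have := Finset.mem_Icc.mp (hP hxP)
      exact ⟨⟨this.1, by omega⟩, hxP⟩
  have h3 := Finset.card_sdiff_add_card_inter (Finset.Icc 1 (v-1)) P
  rw [h2] at h3
  have h4 : (Finset.Icc 1 (v-1)).card = v - 1 := by
    rw [Nat.card_Icc]; omega
  have h5 := card_plt (n := n) hk h1 hik
  rw [nlt, h1']
  rw [← hv] at h5
  omega


/-- extended value of the ordering at (1-based) position `j`, `0` outside `[1,k]` -/
def sv (k : ℕ) (s : List ℕ) (j : ℕ) : ℕ :=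
  if 1 ≤ j ∧ j ≤ k then s.getD (j-1) 0 else 0

/-- the number of slots `j ∈ {0,…,k}` adjacent to a position holding an index `≥ i` -/
def creq (k : ℕ) (s : List ℕ) (i : ℕ) : ℕ :=
  ((Finset.range (k+1)).filter (fun j => i ≤ sv k s j ∨ i ≤ sv k s (j+1))).card

section creqsec

variable {k : ℕ} {s : List ℕ} (hs : s.Perm (List.range' 1 k))

include hs

lemma perm_length : s.length = k := by
  have := hs.length_eq
  rwa [List.length_range'] at this

lemma perm_entry_mem {t : ℕ} (ht : t < k) : 1 ≤ s.getD t 0 ∧ s.getD t 0 ≤ k := by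
  have hl : s.length = k := perm_length hs
  have : s.getD t 0 ∈ s := by
    rw [List.getD_eq_getElem _ _ (by omega)]
    exact List.getElem_mem _
  have := hs.mem_iff.mp this
  rw [List.mem_range'_1] at this
  omega

lemma perm_nodup : s.Nodup := hs.nodup_iff.mpr List.nodup_range'

lemma count_ge {i : ℕ} (h1 : 1 ≤ i) :
    ((Finset.range k).filter (fun t => i ≤ s.getD t 0)).card = k + 1 - i := by
  classical
  have hl : s.length = k := perm_length hs
  have hnd : s.Nodup := perm_nodup hs
  have himg : ((Finset.range k).filter (fun t => i ≤ s.getD t 0)).image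
      (fun t => s.getD t 0) = Finset.Icc i k := by
    ext x
    simp only [Finset.mem_image, Finset.mem_filter, Finset.mem_range, Finset.mem_Icc]
    constructor
    · rintro ⟨t, ⟨ht, hit⟩, rfl⟩
      exact ⟨hit, (perm_entry_mem hs ht).2⟩
    · rintro ⟨hix, hxk⟩
      have hx : x ∈ s := hs.mem_iff.mpr (by rw [List.mem_range'_1]; omega)
      obtain ⟨t, ht, hxt⟩ := List.getElem_of_mem hx
      have ht' : t < k := by omega
      have hgd : s.getD t 0 = x := by
        rw [List.getD_eq_getElem _ _ ht]; exact hxt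
      exact ⟨t, ⟨ht', by rw [hgd]; exact hix⟩, hgd⟩
  have hinj : Set.InjOn (fun t => s.getD t 0)
      ((Finset.range k).filter (fun t => i ≤ s.getD t 0)) := by
    intro a ha b hb hab
    simp only [Finset.coe_filter, Set.mem_setOf_eq, Finset.mem_range] at ha hb
    have ha' : a < s.length := by omega
    have hb' : b < s.length := by omega
    have hab' : s[a] = s[b] := by
      have h2 : s.getD a 0 = s.getD b 0 := hab
      rwa [List.getD_eq_getElem _ _ ha', List.getD_eq_getElem _ _ hb'] at h2
    have := List.nodup_iff_injective_getElem.mp hnd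
      (show s[(⟨a, ha'⟩ : Fin s.length)] = s[(⟨b, hb'⟩ : Fin s.length)] from hab')
    exact congrArg Fin.val this
  have := Finset.card_image_of_injOn hinj
  rw [himg, Nat.card_Icc] at this
  omega

lemma cardA {i : ℕ} (h1 : 1 ≤ i) :
    ((Finset.range (k+1)).filter (fun j => i ≤ sv k s j)).card = k + 1 - i := by
  classical
  have : (Finset.range (k+1)).filter (fun j => i ≤ sv k s j)
      = ((Finset.range k).filter (fun t => i ≤ s.getD t 0)).image (· + 1) := by
    ext j
    simp only [Finset.mem_filter, Finset.mem_range, Finset.mem_image]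
    constructor
    · rintro ⟨hj, hsv⟩
      rw [sv] at hsv
      by_cases hcase : 1 ≤ j ∧ j ≤ k
      · rw [if_pos hcase] at hsv
        exact ⟨j - 1, ⟨by omega, hsv⟩, by omega⟩
      · rw [if_neg hcase] at hsv; omega
    · rintro ⟨t, ⟨ht, hit⟩, rfl⟩
      refine ⟨by omega, ?_⟩
      rw [sv, if_pos (by omega)]
      simpa using hit
  rw [this, Finset.card_image_of_injective _ (add_left_injective 1)]
  exact count_ge hs h1

lemma cardB {i : ℕ} (h1 : 1 ≤ i) :
    ((Finset.range (k+1)).filter (fun j => i ≤ sv k s (j+1))).card = k + 1 - i := by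
  classical
  have : (Finset.range (k+1)).filter (fun j => i ≤ sv k s (j+1))
      = (Finset.range k).filter (fun t => i ≤ s.getD t 0) := by
    ext j
    simp only [Finset.mem_filter, Finset.mem_range]
    constructor
    · rintro ⟨hj, hsv⟩
      rw [sv] at hsv
      by_cases hcase : 1 ≤ j + 1 ∧ j + 1 ≤ k
      · rw [if_pos hcase] at hsv
        simp only [Nat.add_sub_cancel] at hsv
        exact ⟨by omega, hsv⟩
      · rw [if_neg hcase] at hsv; omega
    · rintro ⟨ht, hit⟩
      refine ⟨by omega, ?_⟩
      rw [sv, if_pos (by omega)]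
      simpa using hit
  rw [this]
  exact count_ge hs h1

lemma creq_le_two {i : ℕ} (h1 : 1 ≤ i) : creq k s i ≤ 2 * (k + 1 - i) := by
  classical
  have hsub : (Finset.range (k+1)).filter (fun j => i ≤ sv k s j ∨ i ≤ sv k s (j+1))
      ⊆ ((Finset.range (k+1)).filter (fun j => i ≤ sv k s j)) ∪
        ((Finset.range (k+1)).filter (fun j => i ≤ sv k s (j+1))) := by
    intro j hj
    simp only [Finset.mem_filter, Finset.mem_union] at *
    tauto
  calc creq k s i ≤ _ := Finset.card_le_card hsub
    _ ≤ _ := Finset.card_union_le _ _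
    _ = 2 * (k+1-i) := by rw [cardA hs h1, cardB hs h1]; omega

omit hs in
lemma creq_le_all : creq k s i ≤ k + 1 := by
  calc creq k s i ≤ (Finset.range (k+1)).card := Finset.card_filter_le _ _
    _ = k + 1 := Finset.card_range _

lemma creq_one (hk1 : 1 ≤ k) : creq k s 1 = k + 1 := by
  classical
  rw [creq]
  rw [Finset.filter_true_of_mem, Finset.card_range]
  intro j hj
  rw [Finset.mem_range] at hj
  rcases Nat.eq_zero_or_pos j with rfl | hj1
  · right
    rw [sv, if_pos (by omega)]
    exact (perm_entry_mem hs (by omega)).1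
  · by_cases hjk : j ≤ k
    · left
      rw [sv, if_pos (by omega)]
      exact (perm_entry_mem hs (by omega)).1
    · omega

end creqsec


lemma filter_eq_map (p : ℕ → Bool) : ∀ (l : List ℕ),
    l.filter p = ((List.range l.length).filter (fun t => p (l.getD t 0))).map
      (fun t => l.getD t 0)
  | [] => by simp
  | a :: l => by
    have ih := filter_eq_map p l
    have step : (List.filter (fun t => p ((a :: l).getD t 0))
          ((List.range l.length).map Nat.succ))
        = ((List.range l.length).filter (fun t => p (l.getD t 0))).map Nat.succ := by
      rw [List.filter_map]
      congr 1
      try (funext t; simp [List.getD_cons_succ])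
    have step2 : (((List.range l.length).filter (fun t => p (l.getD t 0))).map
          Nat.succ).map (fun t => (a :: l).getD t 0)
        = ((List.range l.length).filter (fun t => p (l.getD t 0))).map
          (fun t => l.getD t 0) := by
      rw [List.map_map]
      congr 1
      try (funext t; simp [List.getD_cons_succ])
    rw [List.length_cons, List.range_succ_eq_map, List.filter_cons, List.filter_cons]
    by_cases hpa : p a = true
    · rw [if_pos hpa, if_pos (show p ((a :: l).getD 0 0) = true from hpa),
        List.map_cons, step, step2, ← ih]
      rfl
    · rw [if_neg hpa, if_neg (show ¬ (p ((a :: l).getD 0 0) = true) from hpa),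
        step, step2, ← ih]

theorem adm_le {n k : ℕ} {P : Finset ℕ} {s : List ℕ}
    (hP : P ⊆ Finset.Icc 1 n) (hk : P.card = k) (hs : s.Perm (List.range' 1 k))
    (hadm : IsAdmissibleOrdering n P s) {i : ℕ} (h1 : 1 ≤ i) (hik : i ≤ k) :
    creq k s i ≤ nlt n P (pElem n P i) := by
  classical
  have hk1 : 1 ≤ k := by omega
  obtain ⟨l, hlmem, hpin, hfil⟩ := hadm
  rw [permsOf, List.mem_permutations] at hlmem
  have hlen : l.length = n := by simpa using hlmem.length_eq
  have hnd : l.Nodup := hlmem.nodup_iff.mpr List.nodup_range'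
  have hmem1n : ∀ {x}, x ∈ l → 1 ≤ x ∧ x ≤ n := by
    intro x hx
    have := hlmem.mem_iff.mp hx
    rw [List.mem_range'_1] at this
    omega
  have hgetinj : ∀ a b, a < n → b < n → l.getD a 0 = l.getD b 0 → a = b := by
    intro a b ha hb hab
    rw [List.getD_eq_getElem l 0 (show a < l.length by omega)] at hab
    rw [List.getD_eq_getElem l 0 (show b < l.length by omega)] at hab
    exact (List.Nodup.getElem_inj_iff hnd).mp hab
  set T := (List.range n).filter (fun t => decide (l.getD t 0 ∈ P)) with hT
  have hTmem : ∀ {t : ℕ}, t ∈ T ↔ (t < n ∧ l.getD t 0 ∈ P) := by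
    intro t
    rw [hT, List.mem_filter, List.mem_range]
    simp
  have h0 := filter_eq_map (fun v => decide (v ∈ P)) l
  rw [hlen] at h0
  have hTmap : T.map (fun t => l.getD t 0) = List.map (pElem n P) s := by
    rw [hT, ← h0, hfil, orderList]
  have hslen : s.length = k := perm_length hs
  have hTlen : T.length = k := by
    have := congrArg List.length hTmap
    simpa [hslen] using this
  have hTpair : T.Pairwise (· < ·) := by
    rw [hT]
    exact (List.pairwise_lt_range (n := n)).sublist List.filter_sublist
  set tj : ℕ → ℕ := fun j => T.getD (j-1) 0 with htj
  have htjget : ∀ (j : ℕ) (hj : 1 ≤ j) (hjk : j ≤ k), tj j = T[j-1]'(by omega) := by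
    intro j hj hjk
    show T.getD (j-1) 0 = _
    exact List.getD_eq_getElem _ _ (by omega)
  have hTget : ∀ (j : ℕ) (hj : 1 ≤ j) (hjk : j ≤ k),
      l.getD (tj j) 0 = pElem n P (sv k s j) := by
    intro j hj hjk
    have hlt1 : j - 1 < (T.map (fun t => l.getD t 0)).length := by
      rw [List.length_map]; omega
    have hlt2 : j - 1 < (List.map (pElem n P) s).length := by
      rw [List.length_map]; omega
    have h3 : (T.map (fun t => l.getD t 0))[j-1]'hlt1
        = (List.map (pElem n P) s)[j-1]'hlt2 := by
      congr 1
      try exact hTmap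
    rw [List.getElem_map, List.getElem_map] at h3
    rw [htjget j hj hjk]
    rw [h3, sv, if_pos ⟨hj, hjk⟩, List.getD_eq_getElem _ _ (by omega)]
  have htj_lt : ∀ (j : ℕ) (hj : 1 ≤ j) (hjk : j ≤ k), tj j < n := by
    intro j hj hjk
    rw [htjget j hj hjk]
    have : T[j-1]'(by omega) ∈ T := List.getElem_mem _
    exact (hTmem.mp this).1
  have htjP : ∀ (j : ℕ) (hj : 1 ≤ j) (hjk : j ≤ k), l.getD (tj j) 0 ∈ P := by
    intro j hj hjk
    rw [htjget j hj hjk]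
    have : T[j-1]'(by omega) ∈ T := List.getElem_mem _
    exact (hTmem.mp this).2
  have hTmono : ∀ (j j' : ℕ) (hj : 1 ≤ j) (hjj : j < j') (hj'k : j' ≤ k),
      tj j < tj j' := by
    intro j j' hj hjj hj'k
    rw [htjget j hj (by omega), htjget j' (by omega) hj'k]
    exact (List.pairwise_iff_getElem.mp hTpair) _ _ _ _ (by omega)
  have hTmono' : ∀ (j j' : ℕ) (hj : 1 ≤ j) (hjj : j ≤ j') (hj'k : j' ≤ k),
      tj j ≤ tj j' := by
    intro j j' hj hjj hj'k
    rcases Nat.eq_or_lt_of_le hjj with rfl | h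
    · exact le_refl _
    · exact (hTmono j j' hj h hj'k).le
  have hpink : ∀ (j : ℕ) (hj : 1 ≤ j) (hjk : j ≤ k), 0 < tj j ∧ tj j < n - 1 ∧
      l.getD (tj j - 1) 0 < l.getD (tj j) 0 ∧ l.getD (tj j + 1) 0 < l.getD (tj j) 0 := by
    intro j hj hjk
    have hmemP : l.getD (tj j) 0 ∈ pinnacleSet l := by rw [hpin]; exact htjP j hj hjk
    rw [pinnacleSet, Finset.mem_image] at hmemP
    obtain ⟨u, hu, huv⟩ := hmemP
    rw [Finset.mem_filter, Finset.mem_Ioo, hlen] at hu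
    have : u = tj j := hgetinj u (tj j) (by omega) (htj_lt j hj hjk) huv
    subst this
    exact ⟨hu.1.1, hu.1.2, hu.2.1, hu.2.2⟩
  have hgap : ∀ (j : ℕ) (hj : 1 ≤ j) (hjk : j + 1 ≤ k), tj j + 1 < tj (j+1) := by
    intro j hj hjk
    have hlt := hTmono j (j+1) hj (by omega) hjk
    rcases Nat.lt_or_ge (tj j + 1) (tj (j+1)) with h | h
    · exact h
    · exfalso
      have heq : tj (j+1) = tj j + 1 := by omega
      have h4 := (hpink j hj (by omega)).2.2.2
      have h3 := (hpink (j+1) (by omega) hjk).2.2.1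
      rw [heq] at h3
      simp only [Nat.add_sub_cancel] at h3
      omega
  -- intervals between consecutive pinnacle positions
  set A : ℕ → ℕ := fun j => if j = 0 then 0 else tj j + 1 with hA
  set B : ℕ → ℕ := fun j => if j = k then n else tj (j+1) with hB
  have hAeq : ∀ j, A j = if j = 0 then 0 else tj j + 1 := fun j => rfl
  have hBeq : ∀ j, B j = if j = k then n else tj (j+1) := fun j => rfl
  have hA0 : A 0 = 0 := by rw [hAeq 0, if_pos rfl]
  have hApos : ∀ (j : ℕ) (hj : 1 ≤ j), A j = tj j + 1 := by
    intro j hj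
    rw [hAeq j, if_neg (by omega)]
  have hBk : B k = n := by rw [hBeq k, if_pos rfl]
  have hBlt : ∀ (j : ℕ) (hj : j < k), B j = tj (j+1) := by
    intro j hj
    rw [hBeq j, if_neg (by omega)]
  have hABne : ∀ (j : ℕ) (hjk : j ≤ k), A j < B j := by
    intro j hjk
    rcases Nat.eq_zero_or_pos j with rfl | hj1
    · rw [hA0]
      rcases Nat.eq_or_lt_of_le hk1 with hkk | hkk
      · rw [hBlt 0 (by omega)]
        exact (hpink 1 le_rfl hk1).1
      · rw [hBlt 0 (by omega)]
        exact (hpink 1 le_rfl hk1).1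
    · rw [hApos j hj1]
      by_cases hjk' : j = k
      · rw [hjk', hBk]
        subst hjk'
        have := (hpink j hj1 le_rfl).2.1
        omega
      · rw [hBlt j (by omega)]
        exact hgap j hj1 (by omega)
  have hBn : ∀ (j : ℕ) (hjk : j ≤ k), B j ≤ n := by
    intro j hjk
    by_cases hjk' : j = k
    · rw [hjk', hBk]
    · rw [hBlt j (by omega)]
      exact (htj_lt (j+1) (by omega) (by omega)).le
  have hdisj : ∀ (j j' : ℕ) (hjj : j < j') (hj'k : j' ≤ k), B j ≤ A j' := by
    intro j j' hjj hj'k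
    rw [hBlt j (by omega), hApos j' (by omega)]
    have := hTmono' (j+1) j' (by omega) (by omega) hj'k
    omega
  set V : ℕ → ℕ := fun j => if h : j ≤ k then
      (((Finset.Ico (A j) (B j)).image (fun t => l.getD t 0)).min'
        (Finset.Nonempty.image (Finset.nonempty_Ico.mpr (hABne j h)) _)) else 0 with hV
  have hVeq : ∀ (j : ℕ) (hjk : j ≤ k), V j
      = (((Finset.Ico (A j) (B j)).image (fun t => l.getD t 0)).min'
        (Finset.Nonempty.image (Finset.nonempty_Ico.mpr (hABne j hjk)) _)) := by
    intro j hjk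
    show dite _ _ _ = _
    rw [dif_pos hjk]
  have hVspec : ∀ (j : ℕ) (hjk : j ≤ k), ∃ c, A j ≤ c ∧ c < B j ∧ l.getD c 0 = V j := by
    intro j hjk
    rw [hVeq j hjk]
    have := Finset.min'_mem ((Finset.Ico (A j) (B j)).image (fun t => l.getD t 0))
      (Finset.Nonempty.image (Finset.nonempty_Ico.mpr (hABne j hjk)) _)
    rw [Finset.mem_image] at this
    obtain ⟨c, hc, hcv⟩ := this
    rw [Finset.mem_Ico] at hc
    exact ⟨c, hc.1, hc.2, hcv⟩
  have hVle : ∀ (j : ℕ) (hjk : j ≤ k) (c : ℕ) (hc1 : A j ≤ c) (hc2 : c < B j),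
      V j ≤ l.getD c 0 := by
    intro j hjk c hc1 hc2
    rw [hVeq j hjk]
    exact Finset.min'_le _ _ (Finset.mem_image_of_mem _ (Finset.mem_Ico.mpr ⟨hc1, hc2⟩))
  have hVltj : ∀ (j : ℕ) (hj : 1 ≤ j) (hjk : j ≤ k), V j < l.getD (tj j) 0 := by
    intro j hj hjk
    have hc1 : A j ≤ tj j + 1 := le_of_eq (hApos j hj)
    have hc2 : tj j + 1 < B j := by
      by_cases hjk' : j = k
      · rw [hjk', hBk]
        subst hjk'
        have := (hpink j hj le_rfl).2.1
        omega
      · rw [hBlt j (by omega)]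
        exact hgap j hj (by omega)
    calc V j ≤ l.getD (tj j + 1) 0 := hVle j hjk _ hc1 hc2
      _ < l.getD (tj j) 0 := (hpink j hj hjk).2.2.2
  have hVltj' : ∀ (j : ℕ) (hjk : j + 1 ≤ k), V j < l.getD (tj (j+1)) 0 := by
    intro j hjk
    have hpos : 0 < tj (j+1) := (hpink (j+1) (by omega) hjk).1
    have hc1 : A j ≤ tj (j+1) - 1 := by
      rcases Nat.eq_zero_or_pos j with rfl | hj1
      · rw [hA0]; omega
      · rw [hApos j hj1]
        have := hgap j hj1 hjk
        omega
    have hc2 : tj (j+1) - 1 < B j := by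
      rw [hBlt j (by omega)]
      omega
    calc V j ≤ l.getD (tj (j+1) - 1) 0 := hVle j (by omega) _ hc1 hc2
      _ < l.getD (tj (j+1)) 0 := (hpink (j+1) (by omega) hjk).2.2.1
  have hVP : ∀ (j : ℕ) (hjk : j ≤ k), V j ∉ P := by
    intro j hjk hcon
    obtain ⟨c, hc1, hc2, hcv⟩ := hVspec j hjk
    have hcn : c < n := by
      have := hBn j hjk
      omega
    have hcT : c ∈ T := hTmem.mpr ⟨hcn, by rw [hcv]; exact hcon⟩
    obtain ⟨m, hm, hcm⟩ := List.getElem_of_mem hcT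
    have hmk : m < k := by omega
    have hcm' : c = tj (m+1) := by
      rw [htjget (m+1) (by omega) (by omega)]
      simp only [Nat.add_sub_cancel]
      exact hcm.symm
    by_cases hle : m + 1 ≤ j
    · have hj1 : 1 ≤ j := by omega
      have hmono := hTmono' (m+1) j (by omega) hle hjk
      have hAj := hApos j hj1
      omega
    · have hj1k : j + 1 ≤ k := by omega
      have hmono := hTmono' (j+1) (m+1) (by omega) (by omega) (by omega)
      have hBj := hBlt j (by omega)
      omega
  have hV1n : ∀ (j : ℕ) (hjk : j ≤ k), 1 ≤ V j ∧ V j ≤ n := by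
    intro j hjk
    obtain ⟨c, hc1, hc2, hcv⟩ := hVspec j hjk
    have hcn : c < n := by
      have := hBn j hjk
      omega
    have : l.getD c 0 ∈ l := by
      rw [List.getD_eq_getElem _ _ (by omega)]
      exact List.getElem_mem _
    rw [hcv] at this
    exact hmem1n this
  have hVinj : ∀ (j j' : ℕ) (hjj : j < j') (hj'k : j' ≤ k), V j ≠ V j' := by
    intro j j' hjj hj'k heq
    obtain ⟨c, hc1, hc2, hcv⟩ := hVspec j (by omega)
    obtain ⟨c', hc1', hc2', hcv'⟩ := hVspec j' hj'k
    have hd := hdisj j j' hjj hj'k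
    have hcn : c < n := by have := hBn j (by omega); omega
    have hcn' : c' < n := by have := hBn j' hj'k; omega
    have : c = c' := hgetinj c c' hcn hcn' (by rw [hcv, hcv', heq])
    omega
  -- the final counting argument
  rw [creq, nlt]
  apply Finset.card_le_card_of_injOn V
  · intro j hj
    rw [Finset.mem_coe, Finset.mem_filter, Finset.mem_range] at hj
    obtain ⟨hjr, hcond⟩ := hj
    have hjk : j ≤ k := by omega
    rw [Finset.mem_coe, Finset.mem_filter, Finset.mem_Icc]
    have hbasic := hV1n j hjk
    refine ⟨⟨hbasic.1, hbasic.2⟩, hVP j hjk, ?_⟩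
    rcases hcond with hcase | hcase
    · have hjin : 1 ≤ j ∧ j ≤ k := by
        by_contra hcc
        rw [sv, if_neg hcc] at hcase
        omega
      have hsvk : sv k s j ≤ k := by
        rw [sv, if_pos hjin]
        exact (perm_entry_mem hs (by omega)).2
      have hlt : V j < pElem n P (sv k s j) := by
        rw [← hTget j hjin.1 hjin.2]
        exact hVltj j hjin.1 hjin.2
      have := (pelem_le_iff hP hk h1 hik hsvk).mpr hcase
      omega
    · have hjin : 1 ≤ j + 1 ∧ j + 1 ≤ k := by
        by_contra hcc
        rw [sv, if_neg hcc] at hcase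
        omega
      have hsvk : sv k s (j+1) ≤ k := by
        rw [sv, if_pos hjin]
        exact (perm_entry_mem hs (by omega)).2
      have hlt : V j < pElem n P (sv k s (j+1)) := by
        rw [← hTget (j+1) hjin.1 hjin.2]
        exact hVltj' j hjin.2
      have := (pelem_le_iff hP hk h1 hik hsvk).mpr hcase
      omega
  · intro j hj j' hj' heq
    rw [Finset.mem_coe, Finset.mem_filter, Finset.mem_range] at hj hj'
    by_contra hne'
    rcases Nat.lt_or_ge j j' with h | h
    · exact hVinj j j' h (by omega) heq
    · exact hVinj j' j (by omega) (by omega) heq.symm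


lemma sort_getElem_lt {S : Finset ℕ} {t v : ℕ} (ht : t < (S.sort (· ≤ ·)).length)
    (hc : t + 1 ≤ (S.filter (fun x => x < v)).card) : (S.sort (· ≤ ·))[t] < v := by
  classical
  by_contra hge
  push_neg at hge
  have hsub : S.filter (fun x => x < v) ⊆ ((S.sort (· ≤ ·)).take t).toFinset := by
    intro x hx
    rw [Finset.mem_filter] at hx
    rw [List.mem_toFinset]
    have hxS : x ∈ S.sort (· ≤ ·) := (Finset.mem_sort _).mpr hx.1
    obtain ⟨u, hu, hxu⟩ := List.getElem_of_mem hxS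
    have hut : u < t := by
      by_contra hc2
      push_neg at hc2
      have hle : (S.sort (· ≤ ·))[t] ≤ (S.sort (· ≤ ·))[u] := by
        rcases Nat.eq_or_lt_of_le hc2 with rfl | hlt
        · exact le_refl _
        · exact ((sort_get_lt_iff ht hu).mpr hlt).le
      omega
    have hmem : ((S.sort (· ≤ ·)).take t)[u]'(by rw [List.length_take]; omega)
        ∈ (S.sort (· ≤ ·)).take t := List.getElem_mem _
    have hval : ((S.sort (· ≤ ·)).take t)[u]'(by rw [List.length_take]; omega) = x := by
      rw [List.getElem_take]; exact hxu
    rwa [hval] at hmem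
  have hcard := Finset.card_le_card hsub
  have hle2 : ((S.sort (· ≤ ·)).take t).toFinset.card ≤ t := by
    rw [List.toFinset_card_of_nodup ((S.sort_nodup _).sublist (List.take_sublist _ _)),
      List.length_take]
    omega
  omega

lemma pelem_inj {n k : ℕ} {P : Finset ℕ} (hP : P ⊆ Finset.Icc 1 n) (hk : P.card = k)
    {i i' : ℕ} (h1 : 1 ≤ i) (hik : i ≤ k) (h1' : 1 ≤ i') (hik' : i' ≤ k)
    (h : pElem n P i = pElem n P i') : i = i' := by
  rcases lt_trichotomy i i' with hlt | heq | hlt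
  · have := pelem_anti hP hk hlt hik'
    omega
  · exact heq
  · have := pelem_anti hP hk hlt hik
    omega

lemma sv_inj {k : ℕ} {s : List ℕ} (hs : s.Perm (List.range' 1 k))
    {j j' : ℕ} (hj : 1 ≤ j) (hjk : j ≤ k) (hj' : 1 ≤ j') (hjk' : j' ≤ k)
    (h : sv k s j = sv k s j') : j = j' := by
  have hl : s.length = k := perm_length hs
  have hnd : s.Nodup := perm_nodup hs
  rw [sv, if_pos ⟨hj, hjk⟩, sv, if_pos ⟨hj', hjk'⟩] at h
  rw [List.getD_eq_getElem _ _ (show j - 1 < s.length by omega)] at h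
  rw [List.getD_eq_getElem _ _ (show j' - 1 < s.length by omega)] at h
  have := (List.Nodup.getElem_inj_iff hnd).mp h
  omega

lemma sv_surj {k : ℕ} {s : List ℕ} (hs : s.Perm (List.range' 1 k))
    {i : ℕ} (h1 : 1 ≤ i) (hik : i ≤ k) :
    ∃ j, 1 ≤ j ∧ j ≤ k ∧ sv k s j = i := by
  have hl : s.length = k := perm_length hs
  have : i ∈ s := hs.mem_iff.mpr (by rw [List.mem_range'_1]; omega)
  obtain ⟨u, hu, hiu⟩ := List.getElem_of_mem this
  refine ⟨u + 1, by omega, by omega, ?_⟩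
  rw [sv, if_pos ⟨by omega, by omega⟩]
  simp only [Nat.add_sub_cancel]
  rw [List.getD_eq_getElem _ _ (by omega)]
  exact hiu


theorem le_adm {n k : ℕ} {P : Finset ℕ} {s : List ℕ}
    (hP : P ⊆ Finset.Icc 1 n) (hk : P.card = k) (hs : s.Perm (List.range' 1 k))
    (hk1 : 1 ≤ k) (hn : 2*k + 1 ≤ n)
    (h : ∀ i, 1 ≤ i → i ≤ k → creq k s i ≤ nlt n P (pElem n P i)) :
    IsAdmissibleOrdering n P s := by
  classical
  have hslen : s.length = k := perm_length hs
  have hsnd : s.Nodup := perm_nodup hs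
  -- the non-pinnacle values, sorted increasingly
  set X := ((Finset.Icc 1 n) \ P).sort (· ≤ ·) with hX
  have hXlen : X.length = n - k := by
    rw [hX, Finset.length_sort, Finset.card_sdiff_of_subset hP, Nat.card_Icc]
    omega
  have hXnd : X.Nodup := Finset.sort_nodup _ _
  have hXmem : ∀ {x : ℕ}, x ∈ X ↔ (1 ≤ x ∧ x ≤ n ∧ x ∉ P) := by
    intro x
    rw [hX, Finset.mem_sort (α := ℕ) (· ≤ ·), Finset.mem_sdiff, Finset.mem_Icc]
    tauto
  have hXmono : ∀ {u u' : ℕ} (hu : u < X.length) (hu' : u' < X.length),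
      u < u' → X[u] < X[u'] := by
    intro u u' hu hu' huu
    exact (sort_get_lt_iff hu hu').mpr huu
  have hXinj : ∀ u u', u < X.length → u' < X.length →
      X.getD u 0 = X.getD u' 0 → u = u' := by
    intro u u' hu hu' he
    rw [List.getD_eq_getElem _ _ hu, List.getD_eq_getElem _ _ hu'] at he
    rcases lt_trichotomy u u' with hlt | heq | hlt
    · have := hXmono hu hu' hlt; omega
    · exact heq
    · have := hXmono hu' hu hlt; omega
  -- basic sv facts
  have hsv_out : ∀ j, ¬(1 ≤ j ∧ j ≤ k) → sv k s j = 0 := by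
    intro j hj
    rw [sv, if_neg hj]
  have hsv_in : ∀ j, 1 ≤ j → j ≤ k → 1 ≤ sv k s j ∧ sv k s j ≤ k := by
    intro j hj hjk
    rw [sv, if_pos ⟨hj, hjk⟩]
    exact perm_entry_mem hs (by omega)
  have hsvk' : ∀ j, sv k s j ≤ k := by
    intro j
    by_cases hj : 1 ≤ j ∧ j ≤ k
    · exact (hsv_in j hj.1 hj.2).2
    · rw [hsv_out j hj]; omega
  -- the index of the smaller neighbouring pinnacle of slot j
  set M : ℕ → ℕ := fun j => max (sv k s j) (sv k s (j+1)) with hM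
  have hMeq : ∀ j, M j = max (sv k s j) (sv k s (j+1)) := fun _ => rfl
  have hM_in : ∀ j, j ≤ k → 1 ≤ M j ∧ M j ≤ k := by
    intro j hjk
    rw [hMeq]
    constructor
    · rcases Nat.eq_zero_or_pos j with rfl | hj1
      · exact le_max_of_le_right (hsv_in 1 le_rfl hk1).1
      · exact le_max_of_le_left (hsv_in j hj1 hjk).1
    · exact max_le (hsvk' j) (hsvk' (j+1))
  have hcreq_eq : ∀ i, 1 ≤ i → creq k s i
      = ((Finset.range (k+1)).filter (fun j' => i ≤ M j')).card := by
    intro i hi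
    rw [creq]
    congr 1
    apply Finset.filter_congr
    intro j' _
    rw [hMeq j']
    simp [le_max_iff]
  -- the rank of slot j in the lexicographic order of (smallness of pinnacle, slot)
  set rank : ℕ → ℕ := fun j => ((Finset.range (k+1)).filter
      (fun j' => M j < M j' ∨ (M j' = M j ∧ j' < j))).card with hrank
  have hrankeq : ∀ j, rank j = ((Finset.range (k+1)).filter
      (fun j' => M j < M j' ∨ (M j' = M j ∧ j' < j))).card := fun _ => rfl
  have hrank_lt : ∀ j, j ≤ k → rank j + 1 ≤ creq k s (M j) := by
    intro j hjk
    rw [hcreq_eq (M j) (hM_in j hjk).1, hrankeq]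
    have hnotmem : j ∉ (Finset.range (k+1)).filter
        (fun j' => M j < M j' ∨ (M j' = M j ∧ j' < j)) := by
      rw [Finset.mem_filter]
      push_neg
      intro _
      omega
    rw [← Finset.card_insert_of_notMem hnotmem]
    apply Finset.card_le_card
    intro x hx
    rw [Finset.mem_insert, Finset.mem_filter] at hx
    rw [Finset.mem_filter, Finset.mem_range]
    rcases hx with rfl | ⟨hxr, hxc⟩
    · exact ⟨by omega, le_refl _⟩
    · rw [Finset.mem_range] at hxr
      exact ⟨hxr, by omega⟩
  have hrank_le : ∀ j, j ≤ k → rank j ≤ k := by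
    intro j hjk
    rw [hrankeq]
    have hsub : (Finset.range (k+1)).filter
        (fun j' => M j < M j' ∨ (M j' = M j ∧ j' < j))
        ⊆ (Finset.range (k+1)).erase j := by
      intro x hx
      rw [Finset.mem_filter] at hx
      rw [Finset.mem_erase]
      refine ⟨?_, hx.1⟩
      intro hxe
      subst hxe
      omega
    have := Finset.card_le_card hsub
    rw [Finset.card_erase_of_mem (by rw [Finset.mem_range]; omega),
      Finset.card_range] at this
    omega
  have hrank_inj : ∀ j j', j ≤ k → j' ≤ k → j ≠ j' → rank j ≠ rank j' := by
    have key : ∀ j j', j ≤ k → j' ≤ k →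
        (M j < M j' ∨ (M j' = M j ∧ j' < j)) → rank j' < rank j := by
      intro j j' hjk hj'k hprec
      rw [hrankeq, hrankeq]
      apply Finset.card_lt_card
      rw [Finset.ssubset_iff_of_subset]
      · exact ⟨j', by
          rw [Finset.mem_filter, Finset.mem_range]
          exact ⟨by omega, hprec⟩, by
          rw [Finset.mem_filter]
          push_neg
          intro _
          omega⟩
      · intro x hx
        rw [Finset.mem_filter] at hx
        rw [Finset.mem_filter]
        refine ⟨hx.1, ?_⟩
        rcases hx.2 with h1' | h2'
        · rcases hprec with h3' | h4'
          · left; omega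
          · left; omega
        · rcases hprec with h3' | h4'
          · left; omega
          · right; omega
    intro j j' hjk hj'k hne heq
    rcases lt_trichotomy (M j) (M j') with hlt | heqM | hlt
    · have := key j j' hjk hj'k (Or.inl hlt); omega
    · rcases Nat.lt_or_ge j j' with hlt2 | hge
      · have := key j' j hj'k hjk (Or.inr ⟨heqM, hlt2⟩); omega
      · have := key j j' hjk hj'k (Or.inr ⟨heqM.symm, by omega⟩); omega
    · have := key j' j hj'k hjk (Or.inl hlt); omega
  have hrank_surj : ∀ r, r ≤ k → ∃ j, j ≤ k ∧ rank j = r := by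
    intro r hr
    have himg : (Finset.range (k+1)).image rank = Finset.range (k+1) := by
      apply Finset.eq_of_subset_of_card_le
      · intro x hx
        rw [Finset.mem_image] at hx
        obtain ⟨j, hj, hjx⟩ := hx
        rw [Finset.mem_range] at hj
        rw [Finset.mem_range]
        have := hrank_le j (by omega)
        omega
      · rw [Finset.card_range]
        rw [Finset.card_image_of_injOn]
        · rw [Finset.card_range]
        · intro a ha b hb hab
          rw [Finset.mem_coe, Finset.mem_range] at ha hb
          by_contra hne
          exact hrank_inj a b (by omega) (by omega) hne hab
    have : r ∈ (Finset.range (k+1)).image rank := by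
      rw [himg, Finset.mem_range]; omega
    rw [Finset.mem_image] at this
    obtain ⟨j, hj, hjr⟩ := this
    rw [Finset.mem_range] at hj
    exact ⟨j, by omega, hjr⟩
  -- the bottom values of the valleys
  have hrankX : ∀ j, j ≤ k → rank j < X.length := by
    intro j hjk
    have := hrank_le j hjk
    omega
  have hnlt_eq' : ∀ v : ℕ, (((Finset.Icc 1 n) \ P).filter (fun x => x < v)).card
      = nlt n P v := by
    intro v
    rw [nlt]
    congr 1
    ext x
    simp only [Finset.mem_filter, Finset.mem_sdiff]
    tauto
  have hxlt : ∀ j, j ≤ k → X.getD (rank j) 0 < pElem n P (M j) := by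
    intro j hjk
    rw [List.getD_eq_getElem _ _ (hrankX j hjk)]
    have hMj := hM_in j hjk
    apply sort_getElem_lt (by rw [← hX]; exact hrankX j hjk)
    rw [hX] at *
    rw [hnlt_eq']
    calc rank j + 1 ≤ creq k s (M j) := hrank_lt j hjk
      _ ≤ nlt n P (pElem n P (M j)) := h (M j) hMj.1 hMj.2
  -- notation for the pinnacle at slot j and valley values
  set Q : ℕ → ℕ := fun j => pElem n P (sv k s j) with hQdef
  have hQeq : ∀ j, Q j = pElem n P (sv k s j) := fun _ => rfl
  set xv : ℕ → ℕ := fun j => X.getD (rank j) 0 with hxvdef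
  have hxveq : ∀ j, xv j = X.getD (rank j) 0 := fun _ => rfl
  set t0 := n - (2*k+1) with ht0
  have hn_eq : n = t0 + 2*k + 1 := by omega
  set wf : ℕ → ℕ := fun r => if r < t0 then X.getD (n - k - 1 - r) 0
      else if (r - t0) % 2 = 0 then xv ((r - t0)/2)
      else Q ((r - t0 + 1)/2) with hwfdef
  have hwfL : ∀ r, r < t0 → wf r = X.getD (n - k - 1 - r) 0 := by
    intro r hr
    show ite _ _ _ = _
    rw [if_pos hr]
  have hwfx : ∀ j, wf (t0 + 2*j) = xv j := by
    intro j
    show ite _ _ _ = _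
    rw [if_neg (by omega), if_pos (by omega)]
    congr 1
    omega
  have hwfQ : ∀ j, 1 ≤ j → wf (t0 + 2*j - 1) = Q j := by
    intro j hj
    show ite _ _ _ = _
    rw [if_neg (by omega), if_neg (by omega)]
    congr 1
    omega
  -- value bounds
  have hxvQ : ∀ j i', 1 ≤ i' → i' ≤ k → j ≤ k → i' ≤ M j → xv j < pElem n P i' := by
    intro j i' h1' hik' hjk hle
    calc xv j < pElem n P (M j) := by rw [hxveq]; exact hxlt j hjk
      _ ≤ pElem n P i' := (pelem_le_iff hP hk h1' hik' (hM_in j hjk).2).mpr hle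
  have hxvQl : ∀ j, 1 ≤ j → j ≤ k → xv j < Q j := by
    intro j hj hjk
    rw [hQeq]
    have hb := hsv_in j hj hjk
    exact hxvQ j (sv k s j) hb.1 hb.2 hjk (by rw [hMeq]; exact le_max_left _ _)
  have hxvQr : ∀ j, j + 1 ≤ k → xv j < Q (j+1) := by
    intro j hjk
    rw [hQeq]
    have hb := hsv_in (j+1) (by omega) hjk
    exact hxvQ j (sv k s (j+1)) hb.1 hb.2 (by omega) (by rw [hMeq]; exact le_max_right _ _)
  -- facts about X entries
  have hXgd : ∀ u, u < X.length → (1 ≤ X.getD u 0 ∧ X.getD u 0 ≤ n ∧ X.getD u 0 ∉ P) := by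
    intro u hu
    have : X.getD u 0 ∈ X := by
      rw [List.getD_eq_getElem _ _ hu]
      exact List.getElem_mem _
    exact hXmem.mp this
  have hQP : ∀ j, 1 ≤ j → j ≤ k → Q j ∈ P := by
    intro j hj hjk
    rw [hQeq]
    exact pelem_mem hk (hsv_in j hj hjk).1 (hsv_in j hj hjk).2
  have hQ1n : ∀ j, 1 ≤ j → j ≤ k → 1 ≤ Q j ∧ Q j ≤ n := by
    intro j hj hjk
    have := Finset.mem_Icc.mp (hP (hQP j hj hjk))
    exact this
  have hLidx : ∀ r, r < t0 → (k + 1 ≤ n - k - 1 - r ∧ n - k - 1 - r < X.length) := by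
    intro r hr
    omega
  have hxv1n : ∀ j, j ≤ k → 1 ≤ xv j ∧ xv j ≤ n ∧ xv j ∉ P := by
    intro j hjk
    rw [hxveq]
    exact hXgd _ (hrankX j hjk)
  -- classification of positions
  have hclass : ∀ r, r < n → (r < t0) ∨ (∃ j, j ≤ k ∧ r = t0 + 2*j)
      ∨ (∃ j, 1 ≤ j ∧ j ≤ k ∧ r = t0 + 2*j - 1) := by
    intro r hr
    by_cases h1' : r < t0
    · exact Or.inl h1'
    · right
      by_cases h2' : (r - t0) % 2 = 0
      · exact Or.inl ⟨(r - t0)/2, by omega, by omega⟩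
      · exact Or.inr ⟨(r - t0 + 1)/2, by omega, by omega, by omega⟩
  have hwf_val : ∀ r, r < n → 1 ≤ wf r ∧ wf r ≤ n := by
    intro r hr
    rcases hclass r hr with hA | ⟨j, hjk, rfl⟩ | ⟨j, hj1, hjk, rfl⟩
    · rw [hwfL r hA]
      have := hXgd _ (hLidx r hA).2
      omega
    · rw [hwfx j]
      have := hxv1n j hjk
      omega
    · rw [hwfQ j hj1]
      exact hQ1n j hj1 hjk
  have hwfP : ∀ r, r < n → (wf r ∈ P ↔ ∃ j, 1 ≤ j ∧ j ≤ k ∧ r = t0 + 2*j - 1) := by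
    intro r hr
    rcases hclass r hr with hA | ⟨j, hjk, rfl⟩ | ⟨j, hj1, hjk, rfl⟩
    · rw [hwfL r hA]
      have := hXgd _ (hLidx r hA).2
      constructor
      · intro hc; exact absurd hc this.2.2
      · rintro ⟨j, hj1, hjk, he⟩
        omega
    · rw [hwfx j]
      have := hxv1n j hjk
      constructor
      · intro hc; exact absurd hc this.2.2
      · rintro ⟨j', hj1', hjk', he⟩
        omega
    · constructor
      · intro _
        exact ⟨j, hj1, hjk, rfl⟩
      · intro _
        rw [hwfQ j hj1]
        exact hQP j hj1 hjk
  have hwinj : ∀ r r', r < n → r' < n → wf r = wf r' → r = r' := by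
    intro r r' hr hr' he
    rcases hclass r hr with hA | ⟨j, hjk, rfl⟩ | ⟨j, hj1, hjk, rfl⟩ <;>
      rcases hclass r' hr' with hA' | ⟨j', hjk', rfl⟩ | ⟨j', hj1', hjk', rfl⟩
    · rw [hwfL r hA, hwfL r' hA'] at he
      have := hXinj _ _ (hLidx r hA).2 (hLidx r' hA').2 he
      omega
    · rw [hwfL r hA, hwfx j', hxveq j'] at he
      have := hXinj _ _ (hLidx r hA).2 (hrankX j' hjk') he
      have h2' := (hLidx r hA).1
      have h3' := hrank_le j' hjk'
      omega
    · exfalso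
      rw [hwfL r hA, hwfQ j' hj1'] at he
      have := hXgd _ (hLidx r hA).2
      rw [he] at this
      exact this.2.2 (hQP j' hj1' hjk')
    · rw [hwfL r' hA', hwfx j, hxveq j] at he
      have := hXinj _ _ (hrankX j hjk) (hLidx r' hA').2 he
      have h2' := (hLidx r' hA').1
      have h3' := hrank_le j hjk
      omega
    · rw [hwfx j, hwfx j', hxveq j, hxveq j'] at he
      have hre := hXinj _ _ (hrankX j hjk) (hrankX j' hjk') he
      have : j = j' := by
        by_contra hne
        exact hrank_inj j j' hjk hjk' hne hre
      omega
    · exfalso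
      rw [hwfx j, hwfQ j' hj1'] at he
      have := hxv1n j hjk
      rw [he] at this
      exact this.2.2 (hQP j' hj1' hjk')
    · exfalso
      rw [hwfL r' hA', hwfQ j hj1] at he
      have := hXgd _ (hLidx r' hA').2
      rw [← he] at this
      exact this.2.2 (hQP j hj1 hjk)
    · exfalso
      rw [hwfx j', hwfQ j hj1] at he
      have := hxv1n j' hjk'
      rw [← he] at this
      exact this.2.2 (hQP j hj1 hjk)
    · rw [hwfQ j hj1, hwfQ j' hj1', hQeq, hQeq] at he
      have hb := hsv_in j hj1 hjk
      have hb' := hsv_in j' hj1' hjk'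
      have hse := pelem_inj hP hk hb.1 hb.2 hb'.1 hb'.2 he
      have : j = j' := sv_inj hs hj1 hjk hj1' hjk' hse
      omega
  -- the permutation
  set w : List ℕ := (List.range n).map wf with hw
  have hwlen : w.length = n := by rw [hw]; simp
  have hwget : ∀ r, r < n → w.getD r 0 = wf r := by
    intro r hr
    rw [hw, List.getD_eq_getElem _ _ (by simpa using hr)]
    simp
  have hwnd : w.Nodup := by
    rw [hw]
    apply List.Nodup.map_on
    · intro x hx y hy hxy
      rw [List.mem_range] at hx hy
      exact hwinj x y hx hy hxy
    · exact List.nodup_range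
  have hperm : w.Perm (List.range' 1 n) := by
    apply List.perm_of_nodup_nodup_toFinset_eq hwnd List.nodup_range'
    ext v
    rw [List.mem_toFinset, List.mem_toFinset, List.mem_range'_1, hw, List.mem_map]
    constructor
    · rintro ⟨r, hr, rfl⟩
      rw [List.mem_range] at hr
      have := hwf_val r hr
      omega
    · rintro hv
      by_cases hvP : v ∈ P
      · obtain ⟨i, hi1, hik, hiv⟩ := pelem_surj hk hvP
        obtain ⟨j, hj1, hjk, hsvj⟩ := sv_surj hs hi1 hik
        refine ⟨t0 + 2*j - 1, by rw [List.mem_range]; omega, ?_⟩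
        rw [hwfQ j hj1, hQeq, hsvj, hiv]
      · have hvX : v ∈ X := hXmem.mpr ⟨by omega, by omega, hvP⟩
        obtain ⟨u, hu, hvu⟩ := List.getElem_of_mem hvX
        by_cases huk : u ≤ k
        · obtain ⟨j, hjk, hju⟩ := hrank_surj u huk
          refine ⟨t0 + 2*j, by rw [List.mem_range]; omega, ?_⟩
          rw [hwfx j, hxveq, hju, List.getD_eq_getElem _ _ hu]
          exact hvu
        · refine ⟨n - k - 1 - u, by rw [List.mem_range]; omega, ?_⟩
          rw [hwfL _ (by omega)]
          rw [show n - k - 1 - (n - k - 1 - u) = u by omega]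
          rw [List.getD_eq_getElem _ _ hu]
          exact hvu
  -- helper: the prefix is strictly decreasing
  have hLdec : ∀ r, r + 1 < t0 → wf (r+1) < wf r := by
    intro r hr
    rw [hwfL r (by omega), hwfL (r+1) hr]
    rw [List.getD_eq_getElem _ _ (hLidx r (by omega)).2,
      List.getD_eq_getElem _ _ (hLidx (r+1) hr).2]
    exact hXmono (hLidx (r+1) hr).2 (hLidx r (by omega)).2 (by omega)
  -- pinnacle set of w is exactly P
  have hpinw : pinnacleSet w = P := by
    rw [pinnacleSet]
    apply Finset.ext
    intro v
    rw [Finset.mem_image]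
    constructor
    · rintro ⟨r, hrmem, hrv⟩
      rw [Finset.mem_filter, Finset.mem_Ioo, hwlen] at hrmem
      obtain ⟨⟨hr0, hrn⟩, hleft, hright⟩ := hrmem
      have hrn' : r < n := by omega
      rcases hclass r hrn' with hA | ⟨j, hjk, hre⟩ | ⟨j, hj1, hjk, hre⟩
      · exfalso
        have hd : wf (r - 1 + 1) < wf (r - 1) := hLdec (r-1) (by omega)
        rw [show r - 1 + 1 = r by omega] at hd
        rw [hwget (r-1) (by omega), hwget r hrn'] at hleft
        omega
      · exfalso
        have hjlt : j + 1 ≤ k := by omega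
        have he1 : r + 1 = t0 + 2*(j+1) - 1 := by omega
        rw [hwget (r+1) (by omega), hwget r hrn', he1, hre, hwfQ (j+1) (by omega),
          hwfx j] at hright
        have := hxvQr j hjlt
        omega
      · rw [hwget r hrn', hre, hwfQ j hj1] at hrv
        rw [← hrv]
        exact hQP j hj1 hjk
    · intro hv
      obtain ⟨i, hi1, hik, hiv⟩ := pelem_surj hk hv
      obtain ⟨j, hj1, hjk, hsvj⟩ := sv_surj hs hi1 hik
      refine ⟨t0 + 2*j - 1, ?_, ?_⟩
      · rw [Finset.mem_filter, Finset.mem_Ioo, hwlen]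
        refine ⟨⟨by omega, by omega⟩, ?_, ?_⟩
        · have e1 : t0 + 2*j - 1 - 1 = t0 + 2*(j-1) := by omega
          rw [e1, hwget _ (by omega), hwget _ (by omega), hwfQ j hj1, hwfx (j-1)]
          have hb := hsv_in j hj1 hjk
          have : xv (j-1) < pElem n P (sv k s j) :=
            hxvQ (j-1) (sv k s j) hb.1 hb.2 (by omega)
              (by rw [hMeq]
                  have : j - 1 + 1 = j := by omega
                  rw [this]
                  exact le_max_right _ _)
          rw [hQeq]
          exact this
        · have e1 : t0 + 2*j - 1 + 1 = t0 + 2*j := by omega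
          rw [e1, hwget _ (by omega), hwget _ (by omega), hwfQ j hj1, hwfx j]
          exact hxvQl j hj1 hjk
      · rw [hwget _ (by omega), hwfQ j hj1, hQeq, hsvj, hiv]
  -- the filtered list is the order list
  have hfilw : w.filter (fun v => decide (v ∈ P)) = orderList n P s := by
    rw [hw, List.filter_map]
    have hpos : (List.range n).filter ((fun v => decide (v ∈ P)) ∘ wf)
        = (List.range k).map (fun j => t0 + 2*j + 1) := by
      refine (fun h1 h2 h3 => List.Perm.eq_of_pairwise' (r := (· ≤ ·)) h2 h3 h1) ?_ ?_ ?_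
      · apply List.perm_of_nodup_nodup_toFinset_eq
        · exact (List.nodup_range).sublist List.filter_sublist
        · exact List.Nodup.map (fun a b hab => by omega) List.nodup_range
        · ext r
          rw [List.mem_toFinset, List.mem_toFinset, List.mem_filter, List.mem_range,
            List.mem_map]
          constructor
          · rintro ⟨hrn, hrP⟩
            have : wf r ∈ P := by
              have : decide (wf r ∈ P) = true := hrP
              exact of_decide_eq_true this
            obtain ⟨j, hj1, hjk, hre⟩ := (hwfP r hrn).mp this
            refine ⟨j - 1, by rw [List.mem_range]; omega, by omega⟩
          · rintro ⟨j, hj, hje⟩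
            rw [List.mem_range] at hj
            have hrn : r < n := by omega
            refine ⟨hrn, ?_⟩
            show decide (wf r ∈ P) = true
            apply decide_eq_true
            rw [(hwfP r hrn)]
            exact ⟨j + 1, by omega, by omega, by omega⟩
      · exact ((List.pairwise_lt_range (n := n)).sublist List.filter_sublist).imp
          le_of_lt
      · exact List.Pairwise.map _ (fun a b hab => by omega)
          (List.pairwise_lt_range (n := k))
    rw [hpos, List.map_map, orderList]
    apply List.ext_getElem
    · simp [hslen]
    · intro u h1' h2'
      simp only [List.getElem_map, List.getElem_range, Function.comp]
      have huk : u < k := by simpa using h1'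
      have he : t0 + 2*(u+1) - 1 = t0 + 2*u + 1 := by omega
      have := hwfQ (u+1) (by omega)
      rw [he] at this
      rw [this, hQeq, sv, if_pos ⟨by omega, by omega⟩]
      simp only [Nat.add_sub_cancel]
      rw [List.getD_eq_getElem _ _ (by omega)]
  exact ⟨w, by rw [permsOf, List.mem_permutations]; exact hperm, hpinw, hfilw⟩


/-- interleave two lists, starting with the first -/
def ilv : List ℕ → List ℕ → List ℕ
  | [], B => B
  | a :: A, [] => a :: A
  | a :: A, b :: B => a :: b :: ilv A B

lemma ilv_nil : ∀ (A : List ℕ), ilv A [] = A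
  | [] => rfl
  | _ :: _ => rfl

lemma ilv_cons_cons (a b : ℕ) (A B : List ℕ) :
    ilv (a :: A) (b :: B) = a :: b :: ilv A B := rfl

lemma ilv_perm : ∀ (A B : List ℕ), (ilv A B).Perm (A ++ B)
  | [], B => by simp [ilv]
  | a :: A, [] => by simp [ilv]
  | a :: A, b :: B => by
    show (a :: b :: ilv A B).Perm (a :: (A ++ b :: B))
    exact (((ilv_perm A B).cons b).trans List.perm_middle.symm).cons a

lemma ilv_even : ∀ (t : ℕ) (A B : List ℕ), t < A.length → t ≤ B.length →
    (ilv A B).getD (2*t) 0 = A.getD t 0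
  | t, [], B => by intro h _; simp at h
  | 0, a :: A, [] => by
    intro _ _
    rw [ilv_nil]
  | 0, a :: A, b :: B => by
    intro _ _
    rw [ilv_cons_cons]
    rfl
  | t+1, a :: A, [] => by intro _ hB; simp at hB
  | t+1, a :: A, b :: B => by
    intro hA hB
    rw [ilv_cons_cons]
    rw [show 2*(t+1) = 2*t+1+1 by omega]
    rw [List.getD_cons_succ, List.getD_cons_succ, List.getD_cons_succ]
    exact ilv_even t A B (by simpa using hA) (by simpa using hB)

lemma ilv_tail : ∀ (r : ℕ) (A B : List ℕ), 2*B.length ≤ r →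
    (ilv A B).getD r 0 = A.getD (r - B.length) 0
  | r, [], B => by
    intro hr
    show B.getD r 0 = _
    rcases Nat.eq_zero_or_pos B.length with h0 | h0
    · rw [List.getD_eq_default _ _ (by omega), List.getD_eq_default _ _ (by simp)]
    · rw [List.getD_eq_default _ _ (by omega), List.getD_eq_default _ _ (by simp)]
  | r, a :: A, [] => by
    intro _
    rw [ilv_nil]
    rfl
  | r, a :: A, b :: B => by
    intro hr
    have hlen : (b :: B).length = B.length + 1 := rfl
    rw [hlen] at hr
    obtain ⟨r', rfl⟩ : ∃ r', r = r' + 1 + 1 := ⟨r - 2, by omega⟩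
    rw [ilv_cons_cons, List.getD_cons_succ, List.getD_cons_succ]
    rw [ilv_tail r' A B (by omega)]
    rw [show r' + 1 + 1 - (b :: B).length = (r' - B.length) + 1 by rw [hlen]; omega]
    rw [List.getD_cons_succ]

/-- any admissible ordering uses at least two slots at each level -/
lemma creq_ge_two {k : ℕ} {s : List ℕ} (hs : s.Perm (List.range' 1 k))
    {i : ℕ} (h1 : 1 ≤ i) (hik : i ≤ k) : 2 ≤ creq k s i := by
  classical
  obtain ⟨j, hj1, hjk, hsvj⟩ := sv_surj hs h1 hik
  rw [creq]
  have hsub : ({j-1, j} : Finset ℕ) ⊆ (Finset.range (k+1)).filter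
      (fun j' => i ≤ sv k s j' ∨ i ≤ sv k s (j'+1)) := by
    intro x hx
    rw [Finset.mem_insert, Finset.mem_singleton] at hx
    rw [Finset.mem_filter, Finset.mem_range]
    rcases hx with rfl | rfl
    · refine ⟨by omega, Or.inr ?_⟩
      rw [show j - 1 + 1 = j by omega, hsvj]
    · exact ⟨by omega, Or.inl (by rw [hsvj])⟩
  have hcard : ({j-1, j} : Finset ℕ).card = 2 := by
    rw [Finset.card_insert_of_notMem (by
      rw [Finset.mem_singleton]; omega), Finset.card_singleton]
  calc 2 = ({j-1, j} : Finset ℕ).card := hcard.symm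
    _ ≤ _ := Finset.card_le_card hsub

/-- the extremal ordering: interleaving the small pinnacles with the large ones -/
lemma creq_ilv {k i : ℕ} (h2 : 2 ≤ i) (hik : i + 1 ≤ k) :
    ∃ s : List ℕ, s.Perm (List.range' 1 k) ∧
      min (2*(k+1-i)) (k+1) ≤ creq k s i := by
  classical
  obtain ⟨a, ha⟩ : ∃ a, a = k + 1 - i := ⟨_, rfl⟩
  obtain ⟨b, hb⟩ : ∃ b, b = i - 1 := ⟨_, rfl⟩
  have hab : a + b = k := by omega
  have ha1 : 1 ≤ a := by omega
  obtain ⟨s, hsdef⟩ : ∃ s, s = ilv (List.range' i a) (List.range' 1 b) := ⟨_, rfl⟩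
  have hperm : s.Perm (List.range' 1 k) := by
    rw [hsdef]
    apply (ilv_perm _ _).trans
    apply (List.perm_append_comm).trans
    have hap := List.range'_append (s := 1) (m := b) (n := a) (step := 1)
    rw [show 1 + 1 * b = i by omega] at hap
    rw [hap, show b + a = k by omega]
  refine ⟨s, hperm, ?_⟩
  have hslen : s.length = k := perm_length hperm
  have hsmall : ∀ t, t < a → t ≤ b → sv k s (2*t+1) = i + t := by
    intro t hta htb
    rw [sv, if_pos ⟨by omega, by omega⟩]
    rw [show 2*t+1-1 = 2*t by omega]
    rw [hsdef, ilv_even t _ _ (by rw [List.length_range']; omega)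
      (by rw [List.length_range']; omega)]
    rw [List.getD_eq_getElem _ _ (by rw [List.length_range']; omega)]
    rw [List.getElem_range']
    omega
  have htail : ∀ p, 2*b + 1 ≤ p → p ≤ k → sv k s p = i + (p - 1 - b) := by
    intro p hp hpk
    rw [sv, if_pos ⟨by omega, by omega⟩]
    rw [hsdef, ilv_tail (p-1) _ _ (by rw [List.length_range']; omega)]
    rw [List.length_range']
    rw [List.getD_eq_getElem _ _ (by rw [List.length_range']; omega)]
    rw [List.getElem_range']
    omega
  by_cases hcase : 2*a ≤ k + 1
  · have hsub : Finset.range (2*a) ⊆ (Finset.range (k+1)).filter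
        (fun j' => i ≤ sv k s j' ∨ i ≤ sv k s (j'+1)) := by
      intro j hj
      rw [Finset.mem_range] at hj
      rw [Finset.mem_filter, Finset.mem_range]
      refine ⟨by omega, ?_⟩
      rcases Nat.even_or_odd j with ⟨t, rfl⟩ | ⟨t, rfl⟩
      · right
        rw [show t + t + 1 = 2*t+1 by omega, hsmall t (by omega) (by omega)]
        omega
      · left
        rw [hsmall t (by omega) (by omega)]
        omega
    have hc := Finset.card_le_card hsub
    rw [Finset.card_range] at hc
    rw [creq]
    omega
  · have heq : (Finset.range (k+1)).filter
        (fun j' => i ≤ sv k s j' ∨ i ≤ sv k s (j'+1)) = Finset.range (k+1) := by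
      apply Finset.filter_true_of_mem
      intro j hj
      rw [Finset.mem_range] at hj
      by_cases hjb : j ≤ 2*b + 1
      · rcases Nat.even_or_odd j with ⟨t, rfl⟩ | ⟨t, rfl⟩
        · right
          rw [show t + t + 1 = 2*t+1 by omega, hsmall t (by omega) (by omega)]
          omega
        · left
          rw [hsmall t (by omega) (by omega)]
          omega
      · left
        rw [htail j (by omega) (by omega)]
        omega
    rw [creq, heq, Finset.card_range]
    omega


lemma exists_base {n k : ℕ} {P : Finset ℕ} {l0 : List ℕ}
    (hP : P ⊆ Finset.Icc 1 n) (hk : P.card = k)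
    (hl0 : l0.Perm (List.range' 1 n)) (hl0pin : pinnacleSet l0 = P) :
    ∃ s₀, s₀.Perm (List.range' 1 k) ∧ IsAdmissibleOrdering n P s₀ := by
  classical
  have hl0nd : l0.Nodup := hl0.nodup_iff.mpr List.nodup_range'
  obtain ⟨F, hF⟩ : ∃ F, F = l0.filter (fun v => decide (v ∈ P)) := ⟨_, rfl⟩
  have hFnd : F.Nodup := by
    rw [hF]
    exact hl0nd.sublist List.filter_sublist
  have hFmem : ∀ {v : ℕ}, v ∈ F ↔ v ∈ P := by
    intro v
    rw [hF, List.mem_filter]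
    simp only [decide_eq_true_eq]
    constructor
    · exact fun h => h.2
    · intro hv
      refine ⟨?_, hv⟩
      rw [hl0.mem_iff, List.mem_range'_1]
      have := Finset.mem_Icc.mp (hP hv)
      omega
  have hsortlen : (P.sort (· ≤ ·)).length = k := by rw [Finset.length_sort, hk]
  obtain ⟨pidx, hpidx⟩ : ∃ f : ℕ → ℕ, f = fun v => k - (P.sort (· ≤ ·)).idxOf v :=
    ⟨_, rfl⟩
  have hpidx_lt : ∀ {v : ℕ}, v ∈ P → ((P.sort (· ≤ ·)).idxOf v < k) := by
    intro v hv
    have := List.idxOf_lt_length_iff.mpr ((Finset.mem_sort (α := ℕ) (· ≤ ·)).mpr hv)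
    omega
  have hpidx_in : ∀ {v : ℕ}, v ∈ P → (1 ≤ pidx v ∧ pidx v ≤ k) := by
    intro v hv
    have := hpidx_lt hv
    rw [hpidx]
    constructor <;> simp <;> omega
  have hpelem_pidx : ∀ {v : ℕ}, v ∈ P → pElem n P (pidx v) = v := by
    intro v hv
    have hlt := hpidx_lt hv
    have hin := hpidx_in hv
    rw [pelem_eq_get hk _ hin.1 hin.2]
    have hidx : k - pidx v = (P.sort (· ≤ ·)).idxOf v := by
      rw [hpidx]; simp; omega
    have hgi : (P.sort (· ≤ ·))[(P.sort (· ≤ ·)).idxOf v]'(by omega) = v :=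
      List.getElem_idxOf (by omega)
    convert hgi using 2
    try omega
  obtain ⟨s₀, hs₀⟩ : ∃ s₀, s₀ = F.map pidx := ⟨_, rfl⟩
  have hs₀perm : s₀.Perm (List.range' 1 k) := by
    apply List.perm_of_nodup_nodup_toFinset_eq
    · rw [hs₀]
      apply List.Nodup.map_on _ hFnd
      intro x hx y hy hxy
      have hxP := hFmem.mp hx
      have hyP := hFmem.mp hy
      rw [hpidx] at hxy
      simp only at hxy
      have h1 := hpidx_lt hxP
      have h2 := hpidx_lt hyP
      have : (P.sort (· ≤ ·)).idxOf x = (P.sort (· ≤ ·)).idxOf y := by omega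
      exact (List.idxOf_inj ((Finset.mem_sort (α := ℕ) (· ≤ ·)).mpr hxP)).mp this
    · exact List.nodup_range'
    · ext x
      rw [List.mem_toFinset, List.mem_toFinset, List.mem_range'_1, hs₀, List.mem_map]
      constructor
      · rintro ⟨v, hv, rfl⟩
        have := hpidx_in (hFmem.mp hv)
        omega
      · rintro hx
        refine ⟨pElem n P x, hFmem.mpr (pelem_mem hk (by omega) (by omega)), ?_⟩
        have hvP : pElem n P x ∈ P := pelem_mem hk (by omega) (by omega)
        -- pidx (pElem x) = x
        have h1 := hpidx_in hvP
        have h2 := hpelem_pidx hvP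
        -- pElem is injective, so pidx (pElem x) = x
        have := pelem_inj hP hk h1.1 h1.2 (show 1 ≤ x by omega) (show x ≤ k by omega) h2
        omega
  refine ⟨s₀, hs₀perm, l0, by rw [permsOf, List.mem_permutations]; exact hl0, hl0pin, ?_⟩
  rw [orderList, hs₀, List.map_map, ← hF]
  have : ∀ v ∈ F, (pElem n P ∘ pidx) v = id v := by
    intro v hv
    simp only [Function.comp, id]
    exact hpelem_pidx (hFmem.mp hv)
  rw [List.map_congr_left this, List.map_id]

theorem statement18_aux (n k : ℕ) (P : Finset ℕ) (hP : P ⊆ Finset.Icc 1 n)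
    (hk : P.card = k) (hne : Snp n P ≠ 0) :
    ((∀ s : List ℕ, s.Perm (List.range' 1 k) → IsAdmissibleOrdering n P s) ↔
      (∀ i, 2 ≤ i → i ≤ k - 1 →
        min (2*k - i + 2) (3*(k + 1 - i)) ≤ pElem n P i)) := by
  classical
  have hex : ∃ l, l.Perm (List.range' 1 n) ∧ pinnacleSet l = P := by
    by_contra hc
    push_neg at hc
    apply hne
    rw [Snp, List.countP_eq_zero]
    intro l hl
    rw [permsOf, List.mem_permutations] at hl
    simp only [decide_eq_true_eq]
    exact hc l hl
  obtain ⟨l0, hl0perm, hl0pin⟩ := hex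
  rcases Nat.eq_zero_or_pos k with rfl | hk1
  · have hPempty : P = ∅ := Finset.card_eq_zero.mp hk
    constructor
    · intro _ i h2 hi0
      omega
    · intro _ s hsperm
      have hs0 : s = [] := hsperm.eq_nil
      subst hs0
      refine ⟨l0, by rw [permsOf, List.mem_permutations]; exact hl0perm, hl0pin, ?_⟩
      rw [hPempty, orderList]
      simp
  · obtain ⟨s₀, hs₀perm, hs₀adm⟩ := exists_base hP hk hl0perm hl0pin
    have hbase1 : k + 1 ≤ nlt n P (pElem n P 1) := by
      have := adm_le hP hk hs₀perm hs₀adm (le_refl 1) hk1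
      rwa [creq_one hs₀perm hk1] at this
    have hbasek : 2 ≤ nlt n P (pElem n P k) := by
      have h2' := adm_le hP hk hs₀perm hs₀adm hk1 (le_refl k)
      have := creq_ge_two hs₀perm hk1 (le_refl k)
      omega
    have hp1 : 2*k + 1 ≤ pElem n P 1 := by
      have := nlt_eq hP hk (le_refl 1) hk1
      omega
    have hn : 2*k + 1 ≤ n := le_trans hp1 (pelem_le_n hk hP le_rfl hk1)
    constructor
    · intro hall i h2i hik1
      have hik : i + 1 ≤ k := by omega
      obtain ⟨sx, hsxperm, hsxge⟩ := creq_ilv h2i hik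
      have hle := adm_le hP hk hsxperm (hall sx hsxperm)
        (show 1 ≤ i by omega) (show i ≤ k by omega)
      have hnlt := nlt_eq hP hk (show 1 ≤ i by omega) (show i ≤ k by omega)
      omega
    · intro hineq s hsperm
      apply le_adm hP hk hsperm hk1 hn
      intro i h1i hik
      by_cases hi1 : i = 1
      · subst hi1
        rw [creq_one hsperm hk1]
        exact hbase1
      · by_cases hikk : i = k
        · subst hikk
          have := creq_le_two hsperm h1i
          omega
        · have h2i : 2 ≤ i := by omega
          have hik1 : i ≤ k - 1 := by omega
          have hlow := hineq i h2i hik1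
          have hnlt := nlt_eq hP hk h1i hik
          have hb1 := creq_le_two hsperm h1i
          have hb2 : creq k s i ≤ k + 1 := creq_le_all
          omega

end St18


/-- Corollary 4.6 of Rusu–Tenner: a pinnacle set `P` with
`S_n(P) ≠ ∅` is maximally admissible iff `p_i ≥ min(2k − i + 2, 3(k+1−i))` for all
`2 ≤ i ≤ k−1`. -/
theorem statement18 (n k : ℕ) (P : Finset ℕ) (hP : P ⊆ Finset.Icc 1 n)
    (hk : P.card = k) (hne : Snp n P ≠ 0) :
    ((∀ s : List ℕ, s.Perm (List.range' 1 k) → IsAdmissibleOrdering n P s) ↔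
      (∀ i, 2 ≤ i → i ≤ k - 1 →
        min (2*k - i + 2) (3*(k + 1 - i)) ≤ pElem n P i)) :=
  St18.statement18_aux n k P hP hk hne
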